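/- Let t be a rooted plane tree and list its vertices in lexicographic order as v_0 = ∅, v_1, …, v_{|t|−1}. Then for all 0 ≤ i < |t|, the first time the contour exploration visits v_i equals 2i − h(v_i); that is, inf{ j ≥ 0 : θ_t(j) = v_i } = 2i − h(v_i). Moreover, setting j(i) = 2i − h(v_i) for i < |t| and j(|t|) = 2|t|−2 (with v_{|t|} := v_0), for every 0 ≤ i < |t| and every 1 ≤ k < j(i+1) − j(i), the vertex θ_t(j(i)+k) is the parent of θ_t(j(i)+k−1), so that dist_t(θ_t(j(i)), θ_t(j(i)+k)) = k. -/

import Mathlib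

open MeasureTheory Filter Topology
open scoped ENNReal NNReal Classical

noncomputable section

namespace TreeSym

/-- Ulam–Harris words over the positive integers. -/
abbrev Vertex : Type := List ℕ+

instance : MeasurableSpace Vertex := ⊤
instance : MeasurableSpace (Finset Vertex) := ⊤

/-- A finite set of Ulam–Harris words is (the vertex set of) a rooted plane tree if it contains
the empty word, is prefix-closed, and is closed under decreasing the last letter. -/
def IsPlaneTreeSet (t : Finset Vertex) : Prop :=
  ([] : Vertex) ∈ t ∧
  (∀ v ∈ t, ∀ u : Vertex, u <+: v → u ∈ t) ∧
  (∀ v : Vertex, ∀ i j : ℕ+, v ++ [i] ∈ t → j ≤ i → v ++ [j] ∈ t)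

/-- The number of children of `v` in the vertex set `t`. -/
def nChild (t : Finset Vertex) (v : Vertex) : ℕ :=
  (t.filter fun w => ∃ i : ℕ+, w = v ++ [i]).card

/-- Length of the longest common prefix of two words. -/
def lcpLen : Vertex → Vertex → ℕ
  | a :: u, b :: v => if a = b then lcpLen u v + 1 else 0
  | _, _ => 0

/-- The graph distance between two vertices of a plane tree. -/
def treeDist (u v : Vertex) : ℕ := u.length + v.length - 2 * lcpLen u v

/-- History of the contour exploration of the plane tree with vertex set `t`
(most recently visited vertex first). -/
def contourHist (t : Finset Vertex) : ℕ → List Vertex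
  | 0 => [([] : Vertex)]
  | n + 1 =>
    let h := contourHist t n
    let cur := h.headI
    if (∃ m : ℕ, cur ++ [m.succPNat] ∈ t ∧ cur ++ [m.succPNat] ∉ h) then
      (cur ++ [(sInf {m : ℕ | cur ++ [m.succPNat] ∈ t ∧ cur ++ [m.succPNat] ∉ h}).succPNat]) :: h
    else
      cur.dropLast :: h

/-- The contour exploration `θ_t`. -/
def theta (t : Finset Vertex) (i : ℕ) : Vertex := (contourHist t i).headI

/-- Piecewise linear interpolation: `interpFun n f (i/n) = f i` for `0 ≤ i ≤ n`, linear in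
between. -/
def interpFun (n : ℕ) (f : ℕ → ℝ) (s : ℝ) : ℝ :=
  f 0 + ∑ k ∈ Finset.range n, (f (k + 1) - f k) * max 0 (min 1 (s * n - k))

lemma continuous_interpFun (n : ℕ) (f : ℕ → ℝ) : Continuous (interpFun n f) := by
  unfold interpFun
  refine continuous_const.add (continuous_finset_sum _ fun k _ => continuous_const.mul ?_)
  exact continuous_const.max (continuous_const.min
    ((continuous_id.mul continuous_const).sub continuous_const))

/-- Piecewise linear interpolation, as a continuous map on `[0,1]`. -/
def interpMap (n : ℕ) (f : ℕ → ℝ) : C(unitInterval, ℝ) :=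
  ⟨fun s => interpFun n f s, (continuous_interpFun n f).comp continuous_subtype_val⟩

/-- A multitype labeled plane tree with type space `S`: a finite set of Ulam–Harris words,
together with a type and a displacement (the label increment along the edge to the parent)
attached to each word. -/
structure MTree (S : Type*) where
  verts : Finset Vertex
  type : Vertex → S
  disp : Vertex → ℝ

/-- The underlying vertex set is a plane tree. -/
def MTree.IsPlaneTree {S : Type*} (T : MTree S) : Prop := IsPlaneTreeSet T.verts

instance {S : Type*} [MeasurableSpace S] : MeasurableSpace (MTree S) :=
  MeasurableSpace.comap (fun T => (T.verts, T.type, T.disp)) inferInstance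

/-- The label of a vertex: the sum of the displacements along the path from the root. -/
def labelOf {S : Type*} (T : MTree S) (v : Vertex) : ℝ :=
  ∑ j ∈ Finset.range v.length, T.disp (v.take (j + 1))

/-- The contour process, as a function on `ℝ`. -/
def contourFun {S : Type*} (T : MTree S) (s : ℝ) : ℝ :=
  interpFun (2 * T.verts.card - 2) (fun i => ((theta T.verts i).length : ℝ)) s

/-- The label process, as a function on `ℝ`. -/
def labelFun {S : Type*} (T : MTree S) (s : ℝ) : ℝ :=
  interpFun (2 * T.verts.card - 2) (fun i => labelOf T (theta T.verts i)) s

/-- The contour process `C` of a tree, as a continuous map on `[0,1]`. -/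
def contourProcess {S : Type*} (T : MTree S) : C(unitInterval, ℝ) :=
  interpMap (2 * T.verts.card - 2) fun i => ((theta T.verts i).length : ℝ)

/-- The label process `Z` of a labeled tree, as a continuous map on `[0,1]`. -/
def labelProcess {S : Type*} (T : MTree S) : C(unitInterval, ℝ) :=
  interpMap (2 * T.verts.card - 2) fun i => labelOf T (theta T.verts i)

/-- The process `Λ^{(q)}` counting visited vertices of type `q` along the contour. -/
def lambdaProcess {S : Type*} (q : S) (T : MTree S) : C(unitInterval, ℝ) :=
  interpMap (2 * T.verts.card - 2) fun i =>
    (((Finset.range i).filter fun j => T.type (theta T.verts j) = q).card : ℝ)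

/-! ### Symmetrization -/

/-- A vector of permutations, one for each potential vertex. -/
abbrev PermVec : Type := Vertex → Equiv.Perm ℕ+

/-- Relabel a word according to a permutation vector, the permutation used at each level being
the one attached to the (original) prefix. -/
def permWordAux (σ : PermVec) : Vertex → Vertex → Vertex
  | _, [] => []
  | p, i :: rest => σ p i :: permWordAux σ (p ++ [i]) rest

def permWord (σ : PermVec) (v : Vertex) : Vertex := permWordAux σ [] v

/-- The inverse relabeling. -/
def invWordAux (σ : PermVec) : Vertex → Vertex → Vertex
  | _, [] => []
  | p, j :: rest => (σ p)⁻¹ j :: invWordAux σ (p ++ [(σ p)⁻¹ j]) rest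

def invWord (σ : PermVec) (w : Vertex) : Vertex := invWordAux σ [] w

/-- Apply a permutation vector to a labeled multitype tree: children are reordered at every
vertex, types and displacements following their vertices and edges. -/
def permApply {S : Type*} (σ : PermVec) (T : MTree S) : MTree S :=
  ⟨T.verts.image (permWord σ), fun w => T.type (invWord σ w), fun w => T.disp (invWord σ w)⟩

/-- The set `P_t` of admissible permutation vectors for `T`: at a vertex with `k` children the
permutation fixes everything above `k` and permutes `{1,…,k}`; away from the tree it is the
identity. -/
def PermSet {S : Type*} (T : MTree S) : Set PermVec :=
  {σ | (∀ v ∈ T.verts,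
          (∀ i : ℕ+, (i : ℕ) ≤ nChild T.verts v → ((σ v i : ℕ) ≤ nChild T.verts v)) ∧
          (∀ i : ℕ+, nChild T.verts v < (i : ℕ) → σ v i = i)) ∧
        ∀ v ∉ T.verts, σ v = 1}

/-- The law of the symmetrization of the (deterministic) tree `T`: the uniform average of the
point masses at `σ(T)`, `σ ∈ P_T`. -/
def symKernel {S : Type*} [MeasurableSpace S] (T : MTree S) : Measure (MTree S) :=
  ((PermSet T).ncard : ℝ≥0∞)⁻¹ •
    Measure.sum (fun σ : ↥(PermSet T) => Measure.dirac (permApply (σ : PermVec) T))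

/-- The symmetrization `ν^sym` of a law `ν` on labeled multitype plane trees. -/
def symLaw {S : Type*} [MeasurableSpace S] (ν : Measure (MTree S)) : Measure (MTree S) :=
  ν.bind symKernel

/-- A law is symmetric if it is equal to its symmetrization. -/
def IsSymmetricLaw {S : Type*} [MeasurableSpace S] (ν : Measure (MTree S)) : Prop :=
  symLaw ν = ν

/-! ### Valid laws -/

/-- Forget the displacements of a labeled tree. -/
def shape {S : Type*} (T : MTree S) : MTree S := ⟨T.verts, T.type, fun _ => 0⟩

/-- The vector of displacements from `v` to its (first `k`) children. -/
def dispVecAt {S : Type*} (T : MTree S) (v : Vertex) (k : ℕ) : Fin k → ℝ :=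
  fun i => T.disp (v ++ [(i : ℕ).succPNat])

/-- The child type vector of `v` (with `k` children). -/
def ctypeAt {S : Type*} (T : MTree S) (v : Vertex) (k : ℕ) : Fin k → S :=
  fun i => T.type (v ++ [(i : ℕ).succPNat])

/-- A family of displacement distributions: for each parent type and each child type vector of
each length `k`, a measure on `ℝ^k`. -/
abbrev DispFamily (S : Type*) : Type _ :=
  S → (k : ℕ) → (Fin k → S) → Measure (Fin k → ℝ)

/-- `ν` has displacement family `π`: conditionally on the underlying typed tree, the displacement
vectors at the vertices are independent, with laws given by `π` evaluated at the type of a vertex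
and its child type vector. -/
def HasDispFamily {S : Type*} [MeasurableSpace S] (ν : Measure (MTree S))
    (π : DispFamily S) : Prop :=
  (∀ r k s, IsProbabilityMeasure (π r k s)) ∧
  ∀ t : MTree S, ∀ B : (v : Vertex) → Set (Fin (nChild t.verts v) → ℝ),
    (∀ v, MeasurableSet (B v)) →
    ν {T | shape T = shape t ∧ ∀ v ∈ t.verts, dispVecAt T v (nChild t.verts v) ∈ B v}
      = ν {T | shape T = shape t}
        * ∏ v ∈ t.verts, π (t.type v) (nChild t.verts v) (ctypeAt t v (nChild t.verts v)) (B v)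

/-- A law on labeled multitype plane trees is valid if it is carried by plane trees, the law of
the underlying typed plane tree is symmetric, and the displacements admit a displacement family
as above. -/
def IsValidLaw {S : Type*} [MeasurableSpace S] (ν : Measure (MTree S)) : Prop :=
  ν {T | ¬ T.IsPlaneTree} = 0 ∧ IsSymmetricLaw (ν.map shape) ∧ ∃ π : DispFamily S, HasDispFamily ν π

/-! ### Convergence in distribution -/

/-- Convergence in distribution of a sequence of random elements (defined on possibly different
probability spaces) towards a limiting random element: the expectations of every bounded
continuous functional converge. -/
def TendstoInDist {Ω : ℕ → Type*} [∀ n, MeasurableSpace (Ω n)]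
    (P : ∀ n, Measure (Ω n)) {E : Type*} [TopologicalSpace E] (X : ∀ n, Ω n → E)
    {Ω₀ : Type*} [MeasurableSpace Ω₀] (P₀ : Measure Ω₀) (Y : Ω₀ → E) : Prop :=
  ∀ f : BoundedContinuousFunction E ℝ,
    Tendsto (fun n => ∫ ω, f (X n ω) ∂(P n)) atTop (𝓝 (∫ ω, f (Y ω) ∂P₀))

/-- Tightness of a family of laws of random elements of a topological space. -/
def TightSeq {E : Type*} [TopologicalSpace E] {Ω : ℕ → Type*} [∀ n, MeasurableSpace (Ω n)]
    (P : ∀ n, Measure (Ω n)) (X : ∀ n, Ω n → E) : Prop :=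
  ∀ ε : ℝ≥0∞, 0 < ε → ∃ K : Set E, IsCompact K ∧ ∀ n, P n {ω | X n ω ∉ K} ≤ ε

/-! ### Galton–Watson laws -/

instance {S : Type*} [MeasurableSpace S] : MeasurableSpace (List S) := ⊤

/-- The child type vector of `v`, as a list. -/
def ctypeList {S : Type*} (T : MTree S) (v : Vertex) : List S :=
  (List.range (nChild T.verts v)).map fun m => T.type (v ++ [m.succPNat])

/-- `ν` is the law of a multitype Galton–Watson tree with offspring distributions `p`:
the `p s` are permutation-invariant probability measures on finite type sequences, and the
probability that the typed tree equals a given finite plane tree `t` is the product over the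
vertices of `t` of the offspring probabilities of the child type vectors (times the probability
of the root type). -/
def IsGWLaw {S : Type*} [MeasurableSpace S] (ν : Measure (MTree S))
    (p : S → Measure (List S)) : Prop :=
  (∀ s, IsProbabilityMeasure (p s)) ∧
  (∀ s : S, ∀ l l' : List S, l.Perm l' → p s {l} = p s {l'}) ∧
  ∀ t : MTree S, t.IsPlaneTree →
    ν {T | T.verts = t.verts ∧ ∀ v ∈ t.verts, T.type v = t.type v}
      = ν {T | T.type [] = t.type []} * ∏ v ∈ t.verts, p (t.type v) {ctypeList t v}

/-- A tree is normalized if its type and displacement functions take default values off the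
vertex set, and (for unlabeled trees) all displacements vanish. -/
def Normalized {S : Type*} (s₀ : S) (T : MTree S) : Prop :=
  (∀ v ∉ T.verts, T.type v = s₀) ∧ T.disp = fun _ => 0

/-! ### Displacement families: symmetrization and centering -/

/-- The symmetrized displacement family `π^{sym}` defined by
`π^{u,sym}_s(B) = (1/k!) ∑_{σ ∈ 𝔖_k} π^u_{σ(s)}(σ(B))`. -/
def symFamily {S : Type*} (π : DispFamily S) : DispFamily S := fun r k s =>
  ((Nat.factorial k : ℝ≥0∞))⁻¹ •
    ∑ σ : Equiv.Perm (Fin k),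
      (π r k fun j => s (σ.symm j)).map fun x : Fin k → ℝ => fun j => x (σ j)

/-- A displacement family is locally centered if every coordinate of every displacement
distribution has mean zero. -/
def LocallyCentered {S : Type*} (π : DispFamily S) : Prop :=
  ∀ (r : S) (k : ℕ) (s : Fin k → S) (i : Fin k), (∫ x, x i ∂(π r k s)) = 0

/-- A displacement family is centered if, for every `k`, every parent type `r` and every vector
`z` of type counts summing to `k`, the sum over all ordered child type sequences with counts `z`
of the total mean displacement is zero. -/
def Centered {S : Type*} (π : DispFamily S) : Prop :=
  ∀ (k : ℕ) (r : S) (z : S →₀ ℕ), (z.sum fun _ n => n) = k →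
    (∑ᶠ s ∈ {s : Fin k → S | ∀ x : S,
        ((Finset.univ.filter fun i => s i = x).card = z x)},
      ∑ i : Fin k, ∫ x, x i ∂(π r k s)) = 0

/-! ### Subtrees spanned by finitely many vertices -/

/-- The vertex set of the subtree spanned by the vertices `r i` and their ancestors. -/
def spanVerts {k : ℕ} (r : Fin k → Vertex) : Finset Vertex :=
  insert ([] : Vertex) (Finset.univ.biUnion fun i => ((r i).inits).toFinset)

/-- The rank of the child index `i` of `p` among the child indices present in `s`. -/
def childRank (s : Finset Vertex) (p : Vertex) (i : ℕ+) : ℕ+ :=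
  ((s.filter fun w => ∃ j : ℕ+, j ≤ i ∧ w = p ++ [j]).card).toPNat'

def reindexAux (s : Finset Vertex) : Vertex → Vertex → Vertex
  | _, [] => []
  | p, i :: rest => childRank s p i :: reindexAux s (p ++ [i]) rest

/-- The Ulam–Harris label, in the plane tree with vertex set `s`, of the node corresponding to
the vertex `v ∈ s`: children are relabeled consecutively, preserving their order. -/
def reindex (s : Finset Vertex) (v : Vertex) : Vertex := reindexAux s [] v

/-- The set of child indices of `p` present in `s`. -/
def childIdxs (s : Finset Vertex) (p : Vertex) : Finset ℕ+ :=
  (s.filter fun w => ∃ i : ℕ+, w = p ++ [i]).image fun w => w.getLastD 1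

/-- The `m`-th smallest child index of `p` present in `s`. -/
def nthChildIndex (s : Finset Vertex) (p : Vertex) (m : ℕ+) : ℕ+ :=
  ((childIdxs s p).sort (· ≤ ·)).getD ((m : ℕ) - 1) 1

def unIndexAux (s : Finset Vertex) : Vertex → Vertex → Vertex
  | _, [] => []
  | p, m :: rest =>
      nthChildIndex s p m :: unIndexAux s (p ++ [nthChildIndex s p m]) rest

/-- The inverse of `reindex s`. -/
def unIndex (s : Finset Vertex) (w : Vertex) : Vertex := unIndexAux s [] w

/-- The labeled subtree of `T` with vertex set `s ⊆ T.verts`, viewed as a plane tree (with the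
plane structure, the types and the displacements inherited from `T`). -/
def spanTree {S : Type*} (T : MTree S) (s : Finset Vertex) : MTree S :=
  ⟨s.image (reindex s), fun w => T.type (unIndex s w), fun w => T.disp (unIndex s w)⟩

/-- The labeled subtree of `T` with vertex set `s`, with the displacements on child edges of
branchpoints replaced by `0` (the modified labeling `d⟨·⟩`). -/
def spanTreeMod {S : Type*} (T : MTree S) (s : Finset Vertex) : MTree S :=
  ⟨(spanTree T s).verts, (spanTree T s).type,
    fun w => if nChild (spanTree T s).verts w.dropLast = 1 then (spanTree T s).disp w else 0⟩

/-- `R` is a uniform sample of `k` vertices from the random labeled tree `X`: conditionally on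
`X`, the coordinates of `R` are independent and uniformly distributed on the vertex set of `X`. -/
def UniformSample {Ω : Type*} [MeasurableSpace Ω] (P : Measure Ω) {S : Type*} [MeasurableSpace S]
    (X : Ω → MTree S) {k : ℕ} (R : Ω → Fin k → Vertex) : Prop :=
  ∀ A : Set (MTree S), MeasurableSet A → ∀ r : Fin k → Vertex,
    P {ω | X ω ∈ A ∧ R ω = r}
      = ∫⁻ ω in {ω | X ω ∈ A},
          (if ∀ i, r i ∈ (X ω).verts then (((X ω).verts.card : ℝ≥0∞) ^ k)⁻¹ else 0) ∂P

/-! ### Lexicographic enumeration, height process -/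

/-- The vertices of `t` in lexicographic order. -/
def lexEnum (t : Finset Vertex) : List Vertex := t.sort (· ≤ ·)

/-- The `i`-th vertex in lexicographic order (`v_{|t|} = v_0` by convention, since `v_0` is the
root `[]`, which is also the default value). -/
def lexVertex (t : Finset Vertex) (i : ℕ) : Vertex := (lexEnum t).getD i []

/-- The height process `H_t`, as a function on `ℝ`. -/
def heightFun {S : Type*} (T : MTree S) (s : ℝ) : ℝ :=
  interpFun T.verts.card (fun i => ((lexVertex T.verts i).length : ℝ)) s

/-- The lexicographic label process `S_t`, as a function on `ℝ`. -/
def lexLabelFun {S : Type*} (T : MTree S) (s : ℝ) : ℝ :=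
  interpFun T.verts.card (fun i => labelOf T (lexVertex T.verts i)) s

/-- The height process `H_t`, as a continuous map on `[0,1]`. -/
def heightProcess {S : Type*} (T : MTree S) : C(unitInterval, ℝ) :=
  interpMap T.verts.card fun i => ((lexVertex T.verts i).length : ℝ)

/-- The lexicographic label process `S_t`, as a continuous map on `[0,1]`. -/
def lexLabelProcess {S : Type*} (T : MTree S) : C(unitInterval, ℝ) :=
  interpMap T.verts.card fun i => labelOf T (lexVertex T.verts i)

/-- `j_t(i) = 2i - h(v_i)` for `i < |t|`, and `j_t(i) = 2|t| - 2` otherwise. -/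
def jIdx (t : Finset Vertex) (i : ℕ) : ℕ :=
  if i < t.card then 2 * i - (lexVertex t i).length else 2 * t.card - 2

/-- `φ_t(s) = |t|⁻¹ · sup {i ≤ |t| : j_t(i) ≤ s(2|t|-2)}`. -/
def phi (t : Finset Vertex) (s : ℝ) : ℝ :=
  ((sSup {i : ℕ | i ≤ t.card ∧ (jIdx t i : ℝ) ≤ s * (2 * t.card - 2)} : ℕ) : ℝ) / t.card

/-- The increasing reordering of the finite vector `f`. -/
def sortFun {k : ℕ} (f : Fin k → ℝ) (i : ℕ) : ℝ :=
  ((List.ofFn f).insertionSort (· ≤ ·)).getD i 0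

instance : MeasurableSpace C(unitInterval, ℝ) := borel _


section Statement15Proof

variable {t : Finset Vertex}

/-! #### Lexicographic order helpers -/

lemma lt_append_cons_self (l : Vertex) (a : ℕ+) (r : Vertex) : l < l ++ a :: r := by
  induction l with
  | nil => exact List.Lex.nil
  | cons x l ih => exact List.Lex.cons ih

lemma prefix_le {u v : Vertex} (h : u <+: v) : u ≤ v := by
  obtain ⟨s, rfl⟩ := h
  cases s with
  | nil => simp
  | cons a r => exact le_of_lt (lt_append_cons_self u a r)

lemma lex_append_left {u v : Vertex} (p : Vertex) (h : u < v) : p ++ u < p ++ v :=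
  List.Lex.append_left _ h p

lemma lex_append_left_inv : ∀ (p : Vertex) {u v : Vertex}, p ++ u < p ++ v → u < v
  | [], _, _, h => h
  | _ :: p, _, _, h => lex_append_left_inv p (List.cons_lt_cons_self.mp h)

lemma lt_decomp {u w : Vertex} (h : u < w) :
    (u <+: w) ∨ ∃ (p : Vertex) (a b : ℕ+) (u' w' : Vertex),
      a < b ∧ u = p ++ a :: u' ∧ w = p ++ b :: w' := by
  have h' : List.Lex (· < ·) u w := h
  clear h
  induction h' with
  | nil => left; exact List.nil_prefix
  | @cons a l₁ l₂ h ih =>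
    rcases ih with hp | ⟨p, x, y, u', w', hxy, rfl, rfl⟩
    · left; obtain ⟨s, rfl⟩ := hp; exact ⟨s, rfl⟩
    · right; exact ⟨a :: p, x, y, u', w', hxy, rfl, rfl⟩
  | @rel a₁ l₁ a₂ l₂ h =>
    right; exact ⟨[], a₁, a₂, l₁, l₂, h, rfl, rfl⟩

lemma proper_prefix_decomp {u v : Vertex} (h : u <+: v) (hne : u ≠ v) :
    ∃ (a : ℕ+) (s : Vertex), v = u ++ a :: s := by
  obtain ⟨s, rfl⟩ := h
  cases s with
  | nil => simp at hne
  | cons a r => exact ⟨a, r, rfl⟩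

lemma take_append_cons (p : Vertex) (a : ℕ+) (s : Vertex) :
    (p ++ a :: s).take (p.length + 1) = p ++ [a] := by
  have := List.take_length_add_append (l₁ := p) (l₂ := a :: s) 1
  simpa using this

lemma pnat_succ_le {a b : ℕ+} (h : a < b) : a + 1 ≤ b := by
  rw [← PNat.coe_le_coe]
  have := (PNat.coe_lt_coe a b).mpr h
  push_cast
  omega

lemma pnat_lt_succ (a : ℕ+) : a < a + 1 := by
  rw [← PNat.coe_lt_coe]; push_cast; omega

lemma succPNat_coe (c : ℕ+) : ((c : ℕ)).succPNat = c + 1 := by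
  rw [← PNat.coe_inj, Nat.succPNat_coe, PNat.add_coe, PNat.one_coe]

/-! #### Lexicographic enumeration helpers -/

lemma length_lexEnum : (lexEnum t).length = t.card := Finset.length_sort _

lemma mem_lexEnum {w : Vertex} : w ∈ lexEnum t ↔ w ∈ t := Finset.mem_sort _

lemma lexVertex_eq_get {i : ℕ} (h : i < t.card) :
    lexVertex t i = (lexEnum t).get ⟨i, by rwa [length_lexEnum]⟩ :=
  List.getD_eq_get _ _ ⟨i, by rwa [length_lexEnum]⟩

lemma lexVertex_strictMono {i j : ℕ} (hij : i < j) (hj : j < t.card) :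
    lexVertex t i < lexVertex t j := by
  rw [lexVertex_eq_get (hij.trans hj), lexVertex_eq_get hj]
  exact (Finset.sortedLT_sort t).strictMono_get hij

lemma lexVertex_mono {i j : ℕ} (hij : i ≤ j) (hj : j < t.card) :
    lexVertex t i ≤ lexVertex t j := by
  rcases hij.lt_or_eq with h | rfl
  · exact (lexVertex_strictMono h hj).le
  · exact le_rfl

lemma lexVertex_mem {i : ℕ} (h : i < t.card) : lexVertex t i ∈ t := by
  rw [lexVertex_eq_get h]
  exact mem_lexEnum.mp (List.get_mem _ _)


lemma exists_idx {w : Vertex} (h : w ∈ t) : ∃ k, k < t.card ∧ lexVertex t k = w := by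
  obtain ⟨⟨k, hk⟩, hg⟩ := List.mem_iff_get.mp (mem_lexEnum.mpr h)
  have hk' : k < t.card := by rwa [length_lexEnum] at hk
  exact ⟨k, hk', by rw [lexVertex_eq_get hk']; exact hg⟩

lemma le_index {i k : ℕ} (hi : i < t.card) (hk : k < t.card)
    (h : lexVertex t i ≤ lexVertex t k) : i ≤ k := by
  by_contra hc
  push_neg at hc
  exact absurd h (not_le.mpr (lexVertex_strictMono hc hi))

lemma card_pos (ht : IsPlaneTreeSet t) : 0 < t.card := Finset.card_pos.mpr ⟨[], ht.1⟩

lemma lexVertex_zero (ht : IsPlaneTreeSet t) : lexVertex t 0 = [] := by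
  obtain ⟨k, hk, hv⟩ := exists_idx ht.1
  exact le_antisymm (hv ▸ lexVertex_mono (Nat.zero_le k) hk) (not_lt.mp List.not_lex_nil)

/-! #### Contour exploration helpers -/

lemma contour_succ_pos {n : ℕ}
    (hC : ∃ m : ℕ, theta t n ++ [m.succPNat] ∈ t ∧ theta t n ++ [m.succPNat] ∉ contourHist t n) :
    contourHist t (n + 1) =
      (theta t n ++ [(sInf {m : ℕ | theta t n ++ [m.succPNat] ∈ t ∧
          theta t n ++ [m.succPNat] ∉ contourHist t n}).succPNat]) :: contourHist t n := by
  rw [show contourHist t (n + 1) =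
    (if (∃ m : ℕ, theta t n ++ [m.succPNat] ∈ t ∧ theta t n ++ [m.succPNat] ∉ contourHist t n) then
      (theta t n ++ [(sInf {m : ℕ | theta t n ++ [m.succPNat] ∈ t ∧
          theta t n ++ [m.succPNat] ∉ contourHist t n}).succPNat]) :: contourHist t n
     else (theta t n).dropLast :: contourHist t n) from rfl, if_pos hC]

lemma contour_succ_neg {n : ℕ}
    (hC : ¬ ∃ m : ℕ, theta t n ++ [m.succPNat] ∈ t ∧ theta t n ++ [m.succPNat] ∉ contourHist t n) :
    contourHist t (n + 1) = (theta t n).dropLast :: contourHist t n := by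
  rw [show contourHist t (n + 1) =
    (if (∃ m : ℕ, theta t n ++ [m.succPNat] ∈ t ∧ theta t n ++ [m.succPNat] ∉ contourHist t n) then
      (theta t n ++ [(sInf {m : ℕ | theta t n ++ [m.succPNat] ∈ t ∧
          theta t n ++ [m.succPNat] ∉ contourHist t n}).succPNat]) :: contourHist t n
     else (theta t n).dropLast :: contourHist t n) from rfl, if_neg hC]

lemma theta_succ_pos {n : ℕ}
    (hC : ∃ m : ℕ, theta t n ++ [m.succPNat] ∈ t ∧ theta t n ++ [m.succPNat] ∉ contourHist t n) :
    theta t (n + 1) = theta t n ++ [(sInf {m : ℕ | theta t n ++ [m.succPNat] ∈ t ∧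
        theta t n ++ [m.succPNat] ∉ contourHist t n}).succPNat] := by
  rw [theta, contour_succ_pos hC]; rfl

lemma theta_succ_neg {n : ℕ}
    (hC : ¬ ∃ m : ℕ, theta t n ++ [m.succPNat] ∈ t ∧ theta t n ++ [m.succPNat] ∉ contourHist t n) :
    theta t (n + 1) = (theta t n).dropLast := by
  rw [theta, contour_succ_neg hC]; rfl

lemma contourHist_ne_nil (t : Finset Vertex) (n : ℕ) : contourHist t n ≠ [] := by
  cases n with
  | zero => simp [contourHist]
  | succ n =>
    by_cases hC : ∃ m : ℕ, theta t n ++ [m.succPNat] ∈ t ∧ theta t n ++ [m.succPNat] ∉ contourHist t n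
    · rw [contour_succ_pos hC]; simp
    · rw [contour_succ_neg hC]; simp

lemma theta_mem (t : Finset Vertex) (n : ℕ) : theta t n ∈ contourHist t n := by
  have h := contourHist_ne_nil t n
  rw [theta]
  cases hl : contourHist t n with
  | nil => exact absurd hl h
  | cons a l => simp

/-! #### The DFS invariant -/

/-- The invariant of the contour exploration: at time `n`, the set of visited vertices is
`{v_0, …, v_i}` (a lexicographic initial segment), the current vertex is an ancestor of `v_i`,
`n + h(θ_n) = 2i`, and if the walk has backtracked strictly above `v_i` then the subtrees
hanging below the backtracked path are exhausted. -/
def Inv (t : Finset Vertex) (n i : ℕ) : Prop :=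
  i < t.card ∧
  (∀ w : Vertex, w ∈ contourHist t n ↔ w ∈ t ∧ w ≤ lexVertex t i) ∧
  theta t n <+: lexVertex t i ∧
  n + (theta t n).length = 2 * i ∧
  (theta t n ≠ lexVertex t i → ∀ w ∈ t, lexVertex t i < w →
     ¬ ((lexVertex t i).take ((theta t n).length + 1) <+: w))

lemma theta_zero : theta t 0 = [] := rfl

lemma inv_zero (ht : IsPlaneTreeSet t) : Inv t 0 0 := by
  have h0 : lexVertex t 0 = [] := lexVertex_zero ht
  refine ⟨card_pos ht, ?_, ?_, ?_, ?_⟩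
  · intro w
    show w ∈ [([] : Vertex)] ↔ _
    simp only [List.mem_singleton, h0]
    constructor
    · rintro rfl; exact ⟨ht.1, le_rfl⟩
    · rintro ⟨hw, hle⟩; exact le_antisymm hle (not_lt.mp List.not_lex_nil)
  · rw [theta_zero, h0]
  · rw [theta_zero]; rfl
  · intro hne; rw [theta_zero, h0] at hne; exact absurd rfl hne

lemma theta_mem_t {n i : ℕ} (hInv : Inv t n i) : theta t n ∈ t :=
  ((hInv.2.1 _).mp (theta_mem t n)).1

/-- If the contour has no unvisited child available at `θ_n`, nothing unvisited lies
(weakly) below `θ_n`. -/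
lemma key1 (ht : IsPlaneTreeSet t) {n i : ℕ} (hInv : Inv t n i)
    (hnC : ¬ ∃ m : ℕ, theta t n ++ [m.succPNat] ∈ t ∧ theta t n ++ [m.succPNat] ∉ contourHist t n) :
    ∀ w ∈ t, lexVertex t i < w → ¬ (theta t n <+: w) := by
  obtain ⟨hicard, ha, hb, hc, hd⟩ := hInv
  intro w hw hlt hpre
  by_cases hcur : theta t n = lexVertex t i
  · -- the current vertex is the last visited one; `w` is a strict descendant of it
    rw [hcur] at hpre
    obtain ⟨a, s, rfl⟩ := proper_prefix_decomp hpre hlt.ne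
    have hchild : lexVertex t i ++ [a] ∈ t := ht.2.1 _ hw _ ⟨s, by simp⟩
    refine hnC ⟨a.natPred, ?_, ?_⟩
    · rwa [hcur, PNat.succPNat_natPred]
    · rw [hcur, PNat.succPNat_natPred]
      intro hmem
      have := ((ha _).mp hmem).2
      exact absurd this (not_le.mpr (lt_append_cons_self _ a []))
  · -- the walk has backtracked: `θ_n` is a strict ancestor of `v_i`
    obtain ⟨c, rest, hlast⟩ := proper_prefix_decomp hb hcur
    obtain ⟨w', rfl⟩ := hpre
    have hlex : (c :: rest : Vertex) < w' := by
      apply lex_append_left_inv (theta t n)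
      rw [← hlast]; exact hlt
    cases w' with
    | nil => exact absurd hlex List.not_lex_nil
    | cons j r =>
      have hcases : c < j ∨ (c = j ∧ (rest : Vertex) < r) := by
        cases hlex with
        | cons h => exact Or.inr ⟨rfl, h⟩
        | rel h => exact Or.inl h
      rcases hcases with hcj | ⟨rfl, -⟩
      · -- `w` goes through a larger sibling: the child `c+1` of `θ_n` is unvisited
        have hj : theta t n ++ [j] ∈ t := ht.2.1 _ hw _ ⟨r, by simp⟩
        have hc1 : theta t n ++ [c + 1] ∈ t := ht.2.2 _ j (c + 1) hj (pnat_succ_le hcj)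
        have hgt : lexVertex t i < theta t n ++ [c + 1] := by
          rw [hlast]
          exact lex_append_left _ (List.Lex.rel (pnat_lt_succ c))
        refine hnC ⟨(c : ℕ), ?_, ?_⟩
        · rwa [succPNat_coe]
        · rw [succPNat_coe]
          intro hmem
          exact absurd ((ha _).mp hmem).2 (not_le.mpr hgt)
      · -- `w` goes through the same child as `v_i`: contradiction with the invariant
        refine hd hcur _ hw hlt ?_
        rw [hlast, take_append_cons]
        exact ⟨r, by simp⟩

/-- In the down-step case, the newly visited vertex is unvisited, in `t`, and is the
lexicographically least unvisited vertex. -/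
lemma key2 (ht : IsPlaneTreeSet t) {n i : ℕ} (hInv : Inv t n i)
    (hC : ∃ m : ℕ, theta t n ++ [m.succPNat] ∈ t ∧ theta t n ++ [m.succPNat] ∉ contourHist t n) :
    theta t (n + 1) ∈ t ∧ theta t (n + 1) ∉ contourHist t n ∧
    ∀ w ∈ t, lexVertex t i < w → theta t (n + 1) ≤ w := by
  obtain ⟨hicard, ha, hb, hc, hd⟩ := hInv
  set S : Set ℕ := {m : ℕ | theta t n ++ [m.succPNat] ∈ t ∧ theta t n ++ [m.succPNat] ∉ contourHist t n} with hS
  have hth : theta t (n + 1) = theta t n ++ [(sInf S).succPNat] := theta_succ_pos hC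
  have hmem : sInf S ∈ S := Nat.sInf_mem hC
  have hnotvis : ∀ u : Vertex, u ∈ t → lexVertex t i < u → u ∉ contourHist t n := by
    intro u hu hgt hmem'
    exact absurd ((ha _).mp hmem').2 (not_le.mpr hgt)
  by_cases hcur : theta t n = lexVertex t i
  · -- fresh vertex: the next vertex is the first child
    have h0 : (0 : ℕ) ∈ S := by
      obtain ⟨m, hm, _⟩ := hC
      have h1 : theta t n ++ [(1 : ℕ+)] ∈ t := ht.2.2 _ m.succPNat 1 hm m.succPNat.one_le
      have hgt : lexVertex t i < theta t n ++ [(1 : ℕ+)] := by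
        rw [hcur]; exact lt_append_cons_self _ _ _
      exact ⟨h1, hnotvis _ h1 hgt⟩
    have hinf0 : sInf S = 0 := Nat.le_antisymm (Nat.sInf_le h0) (Nat.zero_le _)
    rw [hinf0] at hth
    have hnext : theta t (n + 1) = lexVertex t i ++ [(1 : ℕ+)] := by
      rw [hth, hcur]; rfl
    obtain ⟨h01, h02⟩ := h0
    refine ⟨?_, ?_, ?_⟩
    · rw [hnext, ← hcur]; exact h01
    · rw [hnext, ← hcur]; exact h02
    · intro w hw hlt
      rcases lt_decomp hlt with hp | ⟨p, a, b, u', w', hab, hu, hw'⟩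
      · obtain ⟨a, s, rfl⟩ := proper_prefix_decomp hp hlt.ne
        rw [hnext]
        rcases eq_or_lt_of_le a.one_le with h1 | h1
        · rw [← h1]; exact prefix_le ⟨s, by simp⟩
        · exact le_of_lt (lex_append_left _ (List.Lex.rel h1))
      · rw [hnext, hu, hw']
        have heq : (p ++ a :: u') ++ [(1 : ℕ+)] = p ++ a :: (u' ++ [(1 : ℕ+)]) := by simp
        rw [heq]
        exact le_of_lt (lex_append_left _ (List.Lex.rel hab))
  · -- backtracked position: next vertex is the sibling `c+1` of the child towards `v_i`
    obtain ⟨c, rest, hlast⟩ := proper_prefix_decomp hb hcur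
    have hcS : (c : ℕ) ∈ S := by
      obtain ⟨m, hm, hm'⟩ := hC
      have hgtm : lexVertex t i < theta t n ++ [m.succPNat] := by
        by_contra hle
        exact hm' ((ha _).mpr ⟨hm, not_lt.mp hle⟩)
      have hlexm : (c :: rest : Vertex) < [m.succPNat] := by
        apply lex_append_left_inv (theta t n)
        rw [← hlast]; exact hgtm
      have hcm : c < m.succPNat := by
        cases hlexm with
        | cons h => exact absurd h List.not_lex_nil
        | rel h => exact h
      have hc1 : theta t n ++ [c + 1] ∈ t := ht.2.2 _ m.succPNat (c + 1) hm (pnat_succ_le hcm)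
      have hgt : lexVertex t i < theta t n ++ [c + 1] := by
        rw [hlast]; exact lex_append_left _ (List.Lex.rel (pnat_lt_succ c))
      show theta t n ++ [((c : ℕ)).succPNat] ∈ t ∧
        theta t n ++ [((c : ℕ)).succPNat] ∉ contourHist t n
      rw [succPNat_coe]
      exact ⟨hc1, hnotvis _ hc1 hgt⟩
    have hnotS : ∀ m' : ℕ, m' < (c : ℕ) → m' ∉ S := by
      intro m' hm' hmem'
      have hle : m'.succPNat ≤ c := by
        rw [← PNat.coe_le_coe, Nat.succPNat_coe]
        omega
      have hvis : theta t n ++ [m'.succPNat] ≤ lexVertex t i := by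
        rcases eq_or_lt_of_le hle with h1 | h1
        · rw [hlast, h1]; exact prefix_le ⟨rest, by simp⟩
        · rw [hlast]; exact le_of_lt (lex_append_left _ (List.Lex.rel h1))
      exact hmem'.2 ((ha _).mpr ⟨hmem'.1, hvis⟩)
    have hinfc : sInf S = (c : ℕ) := by
      have h1 : sInf S ≤ (c : ℕ) := Nat.sInf_le hcS
      have h2 : ¬ sInf S < (c : ℕ) := fun h => hnotS _ h hmem
      omega
    have hnext : theta t (n + 1) = theta t n ++ [c + 1] := by
      rw [hth, hinfc, succPNat_coe]
    obtain ⟨hcS1, hcS2⟩ := hcS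
    rw [succPNat_coe] at hcS1 hcS2
    refine ⟨by rw [hnext]; exact hcS1, by rw [hnext]; exact hcS2, ?_⟩
    intro w hw hlt
    rcases lt_decomp hlt with hp | ⟨p, a, b, u', w', hab, hu, hw'⟩
    · -- `w` a strict descendant of `v_i`: impossible by the invariant
      exfalso
      refine hd hcur w hw hlt ?_
      rw [hlast, take_append_cons]
      have h1 : theta t n ++ [c] <+: lexVertex t i := by rw [hlast]; exact ⟨rest, by simp⟩
      exact h1.trans hp
    · -- `w` diverges from `v_i` at some level
      have hp_last : p <+: lexVertex t i := hu ▸ ⟨a :: u', rfl⟩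
      rcases lt_trichotomy p.length (theta t n).length with hlen | hlen | hlen
      · -- divergence strictly above `θ_n`
        have h1 : p ++ [a] <+: lexVertex t i := by rw [hu]; exact ⟨u', by simp⟩
        have hpa : p ++ [a] <+: theta t n :=
          List.prefix_of_prefix_length_le h1 hb
            (by simp only [List.length_append, List.length_singleton]; omega)
        obtain ⟨s2, hs2⟩ := hpa
        rw [hnext, hw', ← hs2]
        have : (p ++ [a]) ++ s2 ++ [c + 1] = p ++ a :: (s2 ++ [c + 1]) := by simp
        rw [this]
        exact le_of_lt (lex_append_left _ (List.Lex.rel hab))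
      · -- divergence exactly at `θ_n`
        have hpeq : p = theta t n := by
          have h1 : p <+: theta t n :=
            List.prefix_of_prefix_length_le hp_last hb (le_of_eq hlen)
          exact List.IsPrefix.eq_of_length h1 hlen
        have hac : a = c ∧ (u' : Vertex) = rest := by
          have : theta t n ++ a :: u' = theta t n ++ c :: rest := by
            rw [← hpeq, ← hu, hlast, hpeq]
          have h2 := List.append_cancel_left this
          exact ⟨by injection h2, by injection h2⟩
        rw [hnext, hw', hpeq]
        rcases eq_or_lt_of_le (pnat_succ_le (hac.1 ▸ hab : c < b)) with h1 | h1
        · rw [h1]; exact prefix_le ⟨w', by simp⟩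
        · exact le_of_lt (lex_append_left _ (List.Lex.rel h1))
      · -- divergence strictly below `θ_n`: impossible by the invariant
        exfalso
        have h1 : theta t n ++ [c] <+: lexVertex t i := by
          rw [hlast]; exact ⟨rest, by simp⟩
        have hpc : theta t n ++ [c] <+: p :=
          List.prefix_of_prefix_length_le h1 hp_last
            (by simp only [List.length_append, List.length_singleton]; omega)
        refine hd hcur w hw hlt ?_
        rw [hlast, take_append_cons]
        exact hpc.trans (hw' ▸ ⟨b :: w', rfl⟩)

/-- One step of the contour exploration preserves the invariant: either an up-step towards the
parent, or a down-step discovering the next vertex in lexicographic order. -/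
lemma inv_step (ht : IsPlaneTreeSet t) {n i : ℕ} (hInv : Inv t n i)
    (hg : i + 1 < t.card ∨ theta t n ≠ []) :
    (Inv t (n + 1) i ∧ theta t n ≠ [] ∧ theta t (n + 1) = (theta t n).dropLast) ∨
    (i + 1 < t.card ∧ Inv t (n + 1) (i + 1) ∧ theta t (n + 1) = lexVertex t (i + 1)) := by
  by_cases hC : ∃ m : ℕ, theta t n ++ [m.succPNat] ∈ t ∧ theta t n ++ [m.succPNat] ∉ contourHist t n
  · right
    obtain ⟨hnt, hnh, hmin⟩ := key2 ht hInv hC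
    obtain ⟨hicard, ha, hb, hc, hd⟩ := hInv
    have hgt : lexVertex t i < theta t (n + 1) := by
      by_contra hle
      exact hnh ((ha _).mpr ⟨hnt, not_lt.mp hle⟩)
    obtain ⟨k, hk, hvk⟩ := exists_idx hnt
    have hik : i < k := by
      by_contra hik
      push_neg at hik
      have h2 : lexVertex t k ≤ lexVertex t i := lexVertex_mono hik hicard
      rw [hvk] at h2
      exact absurd h2 (not_le.mpr hgt)
    have hi1 : i + 1 < t.card := lt_of_le_of_lt (Nat.succ_le_of_lt hik) hk
    have hvi1 : lexVertex t (i + 1) = theta t (n + 1) := by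
      refine le_antisymm ?_ ?_
      · have h2 := lexVertex_mono (Nat.succ_le_of_lt hik) hk
        rwa [hvk] at h2
      · exact hmin _ (lexVertex_mem hi1) (lexVertex_strictMono (Nat.lt_succ_self i) hi1)
    have hhist : contourHist t (n + 1) = theta t (n + 1) :: contourHist t n := by
      rw [contour_succ_pos hC, theta_succ_pos hC]
    have hlen : (theta t (n + 1)).length = (theta t n).length + 1 := by
      rw [theta_succ_pos hC]; simp
    refine ⟨hi1, ⟨hi1, ?_, ?_, ?_, ?_⟩, hvi1.symm⟩
    · intro w
      rw [hhist, List.mem_cons]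
      constructor
      · rintro (rfl | hwh)
        · exact ⟨hnt, by rw [hvi1]⟩
        · obtain ⟨hwt, hwle⟩ := (ha w).mp hwh
          exact ⟨hwt, hwle.trans (by rw [hvi1]; exact hgt.le)⟩
      · rintro ⟨hwt, hwle⟩
        rcases eq_or_lt_of_le hwle with heq | hlt2
        · left; rw [heq, hvi1]
        · right
          refine (ha w).mpr ⟨hwt, ?_⟩
          by_contra hgt2
          have := hmin w hwt (not_le.mp hgt2)
          rw [hvi1] at hlt2
          exact absurd this (not_le.mpr hlt2)
    · rw [hvi1]
    · omega
    · intro hne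
      exact absurd hvi1.symm hne
  · left
    have hkey := key1 ht hInv hC
    obtain ⟨hicard, ha, hb, hc, hd⟩ := hInv
    have hth : theta t (n + 1) = (theta t n).dropLast := theta_succ_neg hC
    have hne : theta t n ≠ [] := by
      intro h0
      rcases hg with hi1 | hne'
      · exact hkey _ (lexVertex_mem hi1) (lexVertex_strictMono (Nat.lt_succ_self i) hi1)
          (h0 ▸ List.nil_prefix)
      · exact hne' h0
    have h1pos : 1 ≤ (theta t n).length := List.length_pos_iff.mpr hne
    have hcur_t : theta t n ∈ t := ((ha _).mp (theta_mem t n)).1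
    have hdl_t : (theta t n).dropLast ∈ t := ht.2.1 _ hcur_t _ (List.dropLast_prefix _)
    have hdl_pre : (theta t n).dropLast <+: lexVertex t i := (List.dropLast_prefix _).trans hb
    have hhist : contourHist t (n + 1) = (theta t n).dropLast :: contourHist t n :=
      contour_succ_neg hC
    refine ⟨⟨hicard, ?_, ?_, ?_, ?_⟩, hne, hth⟩
    · intro w
      rw [hhist, List.mem_cons]
      constructor
      · rintro (rfl | hwh)
        · exact ⟨hdl_t, prefix_le hdl_pre⟩
        · exact (ha w).mp hwh
      · intro hw
        exact Or.inr ((ha w).mpr hw)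
    · rw [hth]; exact hdl_pre
    · rw [hth, List.length_dropLast]; omega
    · intro _ w hw hlt hpre2
      have hlen : (theta t (n + 1)).length + 1 = (theta t n).length := by
        rw [hth, List.length_dropLast]; omega
      rw [hlen] at hpre2
      have htake : (lexVertex t i).take (theta t n).length = theta t n :=
        (List.prefix_iff_eq_take.mp hb).symm
      rw [htake] at hpre2
      exact hkey w hw hlt hpre2

lemma descend (ht : IsPlaneTreeSet t) {i : ℕ} (hi1 : i + 1 < t.card) :
    ∀ (L n : ℕ), (theta t n).length ≤ L → Inv t n i →
      ∃ n', Inv t n' (i + 1) ∧ theta t n' = lexVertex t (i + 1) := by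
  intro L
  induction L with
  | zero =>
    intro n hlen hInv
    rcases inv_step ht hInv (Or.inl hi1) with ⟨hInv', hne, hth⟩ | ⟨_, hInv', hth⟩
    · exact absurd (List.length_eq_zero_iff.mp (Nat.le_zero.mp hlen)) hne
    · exact ⟨n + 1, hInv', hth⟩
  | succ L ih =>
    intro n hlen hInv
    rcases inv_step ht hInv (Or.inl hi1) with ⟨hInv', hne, hth⟩ | ⟨_, hInv', hth⟩
    · refine ih (n + 1) ?_ hInv'
      rw [hth, List.length_dropLast]
      have := List.length_pos_iff.mpr hne
      omega
    · exact ⟨n + 1, hInv', hth⟩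

lemma reach (ht : IsPlaneTreeSet t) : ∀ i, i < t.card →
    ∃ n, Inv t n i ∧ theta t n = lexVertex t i := by
  intro i
  induction i with
  | zero => exact fun _ => ⟨0, inv_zero ht, by rw [lexVertex_zero ht]; rfl⟩
  | succ i ih =>
    intro hi1
    obtain ⟨n, hInv, -⟩ := ih (Nat.lt_of_succ_lt hi1)
    exact descend ht hi1 _ n le_rfl hInv

lemma first_visit (ht : IsPlaneTreeSet t) {i : ℕ} (hi : i < t.card) :
    theta t (2 * i - (lexVertex t i).length) = lexVertex t i ∧
    Inv t (2 * i - (lexVertex t i).length) i ∧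
    (lexVertex t i).length ≤ 2 * i := by
  obtain ⟨n, hInv, hth⟩ := reach ht i hi
  have hc := hInv.2.2.2.1
  rw [hth] at hc
  have h1 : (lexVertex t i).length ≤ 2 * i := by omega
  have h2 : 2 * i - (lexVertex t i).length = n := by omega
  rw [h2]
  exact ⟨hth, hInv, h1⟩

lemma inv_exists (ht : IsPlaneTreeSet t) : ∀ n, n ≤ 2 * (t.card - 1) → ∃ i, Inv t n i := by
  intro n
  induction n with
  | zero => exact fun _ => ⟨0, inv_zero ht⟩
  | succ n ih =>
    intro hn
    obtain ⟨i, hInv⟩ := ih (by omega)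
    have hg : i + 1 < t.card ∨ theta t n ≠ [] := by
      by_cases h0 : theta t n = []
      · left
        have hc := hInv.2.2.2.1
        have hi := hInv.1
        rw [h0] at hc
        simp only [List.length_nil, Nat.add_zero] at hc
        omega
      · exact Or.inr h0
    rcases inv_step ht hInv hg with ⟨h1, -, -⟩ | ⟨-, h1, -⟩
    · exact ⟨i, h1⟩
    · exact ⟨i + 1, h1⟩

lemma visit_lb (ht : IsPlaneTreeSet t) {i j : ℕ} (hi : i < t.card)
    (hj : theta t j = lexVertex t i) : 2 * i - (lexVertex t i).length ≤ j := by
  by_cases hcase : j ≤ 2 * (t.card - 1)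
  · obtain ⟨d, hInv⟩ := inv_exists ht j hcase
    have hle : lexVertex t i ≤ lexVertex t d := by
      have h2 := ((hInv.2.1 _).mp (theta_mem t j)).2
      rwa [hj] at h2
    have hid : i ≤ d := le_index hi hInv.1 hle
    have hc := hInv.2.2.2.1
    rw [hj] at hc
    omega
  · push_neg at hcase
    omega

lemma stay (ht : IsPlaneTreeSet t) {i : ℕ} (hi : i < t.card) :
    ∀ k, k < jIdx t (i + 1) - jIdx t i → Inv t (jIdx t i + k) i := by
  have hτ : jIdx t i = 2 * i - (lexVertex t i).length := if_pos hi
  obtain ⟨hfv1, hfv2, hfv3⟩ := first_visit ht hi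
  have hsum : jIdx t i + (lexVertex t i).length = 2 * i := by omega
  intro k
  induction k with
  | zero =>
    intro _
    rw [Nat.add_zero, hτ]
    exact hfv2
  | succ k ih =>
    intro hk
    have hInv := ih (by omega)
    have hck := hInv.2.2.2.1
    have hg : i + 1 < t.card ∨ theta t (jIdx t i + k) ≠ [] := by
      by_cases hi1 : i + 1 < t.card
      · exact Or.inl hi1
      · right
        have hcard : i + 1 = t.card := by omega
        have hJ : jIdx t (i + 1) = 2 * t.card - 2 := if_neg (by omega)
        intro h0
        rw [h0] at hck
        simp only [List.length_nil, Nat.add_zero] at hck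
        omega
    rcases inv_step ht hInv hg with ⟨h1, -, -⟩ | ⟨hi1, h1, hth⟩
    · exact h1
    · exfalso
      have hc := h1.2.2.2.1
      rw [hth] at hc
      have hJ : jIdx t (i + 1) = 2 * (i + 1) - (lexVertex t (i + 1)).length := if_pos hi1
      omega

lemma lcpLen_take : ∀ (l : Vertex) (m : ℕ), lcpLen l (l.take m) = min m l.length := by
  intro l
  induction l with
  | nil => intro m; simp [lcpLen]
  | cons a l ih =>
    intro m
    cases m with
    | zero => simp [lcpLen]
    | succ m =>
      rw [List.take_succ_cons]
      show (if a = a then lcpLen l (l.take m) + 1 else 0) = _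
      rw [if_pos rfl, ih m]
      simp only [List.length_cons]
      omega

lemma take_dropLast_take {l : Vertex} {m : ℕ} (hm : m < l.length) :
    (l.take (m + 1)).dropLast = l.take m := by
  rw [List.dropLast_eq_take, List.length_take, List.take_take]
  congr 1
  omega

end Statement15Proof


/-- facts in the proof of Proposition 3.7. For a rooted plane tree with
vertices `v_0, …, v_{|t|-1}` in lexicographic order: the first visit time of `v_i` by the contour
exploration is `2i - h(v_i)`; moreover, with `j(i) = 2i - h(v_i)` (and `j(|t|) = 2|t|-2`),
for `1 ≤ k < j(i+1) - j(i)` the vertex `θ_t(j(i)+k)` is the parent of `θ_t(j(i)+k-1)`, and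
`dist_t(θ_t(j(i)), θ_t(j(i)+k)) = k`. -/
theorem statement15 (t : Finset Vertex) (ht : IsPlaneTreeSet t) :
    (∀ i < t.card,
        sInf {j : ℕ | theta t j = lexVertex t i} = 2 * i - (lexVertex t i).length)
    ∧ ∀ i < t.card, ∀ k : ℕ, 1 ≤ k → k < jIdx t (i + 1) - jIdx t i →
        theta t (jIdx t i + k) = (theta t (jIdx t i + k - 1)).dropLast
        ∧ treeDist (theta t (jIdx t i)) (theta t (jIdx t i + k)) = k := by
  constructor
  · intro i hi
    obtain ⟨hfv1, hfv2, hfv3⟩ := first_visit ht hi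
    refine le_antisymm (Nat.sInf_le hfv1) (le_csInf ⟨_, hfv1⟩ fun j hj => visit_lb ht hi hj)
  · intro i hi k hk1 hk2
    have hτ : jIdx t i = 2 * i - (lexVertex t i).length := if_pos hi
    obtain ⟨hfv1, hfv2, hfv3⟩ := first_visit ht hi
    have hsum : jIdx t i + (lexVertex t i).length = 2 * i := by omega
    have hInvk := stay ht hi k hk2
    have hInvk1 := stay ht hi (k - 1) (by omega)
    have hck := hInvk.2.2.2.1
    have hck1 := hInvk1.2.2.2.1
    have hkh : k ≤ (lexVertex t i).length := by omega
    have hthk : theta t (jIdx t i + k)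
        = (lexVertex t i).take ((lexVertex t i).length - k) := by
      have h1 := List.prefix_iff_eq_take.mp hInvk.2.2.1
      rw [h1]
      congr 1
      omega
    have hthk1 : theta t (jIdx t i + (k - 1))
        = (lexVertex t i).take ((lexVertex t i).length - k + 1) := by
      have h1 := List.prefix_iff_eq_take.mp hInvk1.2.2.1
      rw [h1]
      congr 1
      omega
    have hidx : jIdx t i + k - 1 = jIdx t i + (k - 1) := by omega
    have hthj : theta t (jIdx t i) = lexVertex t i := by rw [hτ]; exact hfv1
    constructor
    · rw [hidx, hthk, hthk1,
        take_dropLast_take (by omega : (lexVertex t i).length - k < (lexVertex t i).length)]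
    · rw [hthj, hthk]
      unfold treeDist
      rw [lcpLen_take, List.length_take]
      omega


end TreeSym
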